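/- Let A and B be Hermitian n×n complex matrices and let γ : [0,∞) → ℝ be a continuous, nondecreasing function. If ‖exp(−iAt) − exp(−iBt)‖₂ ≤ t·γ(t) for all t ≥ 0, then ‖A − B‖₂ ≤ γ(t) for every t ≥ 0. -/

import Mathlib

/-- Spectral norm: the operator norm on `n × n` complex matrices induced by the
Euclidean norm on `ℂⁿ`. -/
noncomputable def specNorm {n : ℕ} (A : Matrix (Fin n) (Fin n) ℂ) : ℝ :=
  ‖Matrix.toEuclideanCLM (𝕜 := ℂ) A‖

/-- The `ℂ`-continuous linear equivalence underlying `Matrix.toEuclideanCLM`. -/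
noncomputable def matCLE (n : ℕ) :
    Matrix (Fin n) (Fin n) ℂ ≃L[ℂ] (EuclideanSpace ℂ (Fin n) →L[ℂ] EuclideanSpace ℂ (Fin n)) :=
  LinearEquiv.toContinuousLinearEquiv
  { toFun := Matrix.toEuclideanCLM (𝕜 := ℂ),
    invFun := (Matrix.toEuclideanCLM (𝕜 := ℂ)).symm,
    left_inv := fun M => by simp,
    right_inv := fun f => by simp,
    map_add' := fun x y => map_add _ x y,
    map_smul' := fun c x => map_smul _ c x }

lemma matCLE_apply {n : ℕ} (M : Matrix (Fin n) (Fin n) ℂ) :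
    matCLE n M = Matrix.toEuclideanCLM (𝕜 := ℂ) M := rfl

/-- `toEuclideanCLM` commutes with the exponential. -/
lemma toEuclideanCLM_exp {n : ℕ} (M : Matrix (Fin n) (Fin n) ℂ) :
    Matrix.toEuclideanCLM (𝕜 := ℂ) (NormedSpace.exp M)
      = NormedSpace.exp (Matrix.toEuclideanCLM (𝕜 := ℂ) M) := by
  rw [NormedSpace.exp_eq_tsum ℂ, NormedSpace.exp_eq_tsum ℂ, ← matCLE_apply, (matCLE n).map_tsum]
  refine tsum_congr fun k => ?_
  rw [map_smul]; exact congrArg _ (map_pow (Matrix.toEuclideanCLM (𝕜 := ℂ)) M k)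

open Filter Topology NormedSpace in
set_option maxHeartbeats 1000000 in
set_option synthInstance.maxHeartbeats 400000 in
/-- If `A`, `B` are Hermitian and `γ : [0,∞) → ℝ` is continuous and nondecreasing with
`‖exp(−iAt) − exp(−iBt)‖₂ ≤ t·γ(t)` for all `t ≥ 0`, then `‖A − B‖₂ ≤ γ(t)` for all `t ≥ 0`. -/
theorem norm_sub_le_gamma {n : ℕ} (A B : Matrix (Fin n) (Fin n) ℂ)
    (hA : A.IsHermitian) (hB : B.IsHermitian) (γ : ℝ → ℝ)
    (hγcont : ContinuousOn γ (Set.Ici 0)) (hγmono : MonotoneOn γ (Set.Ici 0))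
    (hbound : ∀ t : ℝ, 0 ≤ t →
      specNorm (NormedSpace.exp ((-(Complex.I * t)) • A)
        - NormedSpace.exp ((-(Complex.I * t)) • B)) ≤ t * γ t) :
    ∀ t : ℝ, 0 ≤ t → specNorm (A - B) ≤ γ t := by
  intro t ht
  set a := Matrix.toEuclideanCLM (𝕜 := ℂ) A with ha
  set b := Matrix.toEuclideanCLM (𝕜 := ℂ) B with hb
  -- transfer the bound to the CLM side
  have hb' : ∀ s : ℝ, 0 ≤ s →
      ‖exp ((-(Complex.I * s)) • a) - exp ((-(Complex.I * s)) • b)‖ ≤ s * γ s := by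
    intro s hs
    have h := hbound s hs
    rwa [specNorm, map_sub, toEuclideanCLM_exp, toEuclideanCLM_exp, map_smul, map_smul,
      ← ha, ← hb] at h
  set x := (-Complex.I) • a with hx
  set y := (-Complex.I) • b with hy
  -- derivative of s ↦ exp((s : ℂ) • v) at 0 is v
  have hderiv : ∀ v : EuclideanSpace ℂ (Fin n) →L[ℂ] EuclideanSpace ℂ (Fin n),
      HasDerivAt (fun s : ℝ => exp ((s : ℂ) • v)) v 0 := by
    intro v
    have h1 : HasDerivAt (fun u : ℂ => exp (u • v)) v 0 := by
      have h := hasDerivAt_exp_smul_const (𝕂 := ℂ) v (0 : ℂ)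
      exact h.congr_deriv (by rw [zero_smul ℂ v, NormedSpace.exp_zero, one_mul])
    have h1' : HasFDerivAt (fun u : ℂ => exp (u • v))
        (((ContinuousLinearMap.smulRight (1 : ℂ →L[ℂ] ℂ) v)).restrictScalars ℝ)
        (Complex.ofRealCLM (0 : ℝ)) := by
      exact (h1.hasFDerivAt.restrictScalars ℝ)
    have h2 := h1'.comp (0 : ℝ) (Complex.ofRealCLM.hasFDerivAt (x := (0 : ℝ)))
    have h3 := h2.hasDerivAt
    simp [Function.comp] at h3
    exact h3
  have hxa : HasDerivAt (fun s : ℝ => exp ((-(Complex.I * s)) • a)) x 0 := by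
    have : (fun s : ℝ => exp ((-(Complex.I * s)) • a))
        = fun s : ℝ => exp ((s : ℂ) • x) := by
      funext s
      rw [hx, smul_smul]
      congr 1
      ring
    rw [this]
    exact hderiv x
  have hyb : HasDerivAt (fun s : ℝ => exp ((-(Complex.I * s)) • b)) y 0 := by
    have : (fun s : ℝ => exp ((-(Complex.I * s)) • b))
        = fun s : ℝ => exp ((s : ℂ) • y) := by
      funext s
      rw [hy, smul_smul]
      congr 1
      ring
    rw [this]
    exact hderiv y
  set F : ℝ → (EuclideanSpace ℂ (Fin n) →L[ℂ] EuclideanSpace ℂ (Fin n)) :=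
    fun s => exp ((-(Complex.I * s)) • a) - exp ((-(Complex.I * s)) • b) with hF
  have hFd : HasDerivAt F (x - y) 0 := hxa.sub hyb
  have hF0 : F 0 = 0 := by
    have e1 : (-(Complex.I * ((0:ℝ):ℂ))) = (0:ℂ) := by simp
    have e2 : (0:ℂ) • a = 0 := zero_smul ℂ a
    have e3 : (0:ℂ) • b = 0 := zero_smul ℂ b
    show exp ((-(Complex.I * ((0:ℝ):ℂ))) • a) - exp ((-(Complex.I * ((0:ℝ):ℂ))) • b) = 0
    rw [e1, e2, e3, sub_self]
  -- the slope tends to x - y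
  have hslope := hasDerivAt_iff_tendsto_slope.mp hFd
  have h3 : Tendsto (fun s => ‖slope F 0 s‖) (𝓝[>] (0 : ℝ)) (𝓝 ‖x - y‖) :=
    (hslope.mono_left (nhdsWithin_mono 0 fun u hu => ne_of_gt hu)).norm
  have h4 : Tendsto γ (𝓝[>] (0 : ℝ)) (𝓝 (γ 0)) :=
    (hγcont 0 (by simp)).mono_left (nhdsWithin_mono 0 Set.Ioi_subset_Ici_self)
  have h5 : ∀ᶠ s in 𝓝[>] (0 : ℝ), ‖slope F 0 s‖ ≤ γ s := by
    filter_upwards [self_mem_nhdsWithin] with s hs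
    have hs0 : (0 : ℝ) < s := hs
    have hnorm : ‖slope F 0 s‖ = s⁻¹ * ‖F s‖ := by
      rw [slope_def_module, hF0, sub_zero, sub_zero, norm_smul, Real.norm_eq_abs,
        abs_of_pos (inv_pos.mpr hs0)]
    rw [hnorm]
    calc s⁻¹ * ‖F s‖ ≤ s⁻¹ * (s * γ s) := by
          exact mul_le_mul_of_nonneg_left (hb' s hs0.le) (inv_nonneg.mpr hs0.le)
      _ = γ s := by field_simp
  have h6 : ‖x - y‖ ≤ γ 0 := le_of_tendsto_of_tendsto h3 h4 h5
  have hxy : ‖x - y‖ = ‖a - b‖ := by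
    have h7 : -Complex.I • a - -Complex.I • b = -Complex.I • (a - b) := (smul_sub _ _ _).symm
    have h8 := norm_smul (-Complex.I) (a - b)
    rw [hx, hy, h7, h8]
    simp
  calc specNorm (A - B) = ‖a - b‖ := by rw [specNorm, map_sub, ← ha, ← hb]
    _ = ‖x - y‖ := hxy.symm
    _ ≤ γ 0 := h6
    _ ≤ γ t := hγmono (Set.self_mem_Ici) ht ht
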